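/- Let K be a commutative field equipped with an ℝ-algebra structure (i.e. a field extension of ℝ), and let ℍ denote the division ring of Hamilton quaternions over ℝ. Then ℍ ⊗_ℝ K is a division ring if and only if the quadratic form x₁² + x₂² + x₃² + x₄² has only the trivial zero on K, i.e. if and only if −1 is not a sum of three squares in K. -/

import Mathlib

open TensorProduct Quaternion

set_option maxHeartbeats 1000000
set_option synthInstance.maxHeartbeats 400000

noncomputable section QTaux

variable (K : Type*) [Field K] [Algebra ℝ K]

/-- The standard quaternionic basis of `ℍ[K]` viewed as an `ℝ`-algebra. -/
def QTaux.qb : QuaternionAlgebra.Basis ℍ[K] (-1 : ℝ) (0 : ℝ) (-1 : ℝ) where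
  i := ⟨0, 1, 0, 0⟩
  j := ⟨0, 0, 1, 0⟩
  k := ⟨0, 0, 0, 1⟩
  i_mul_i := by
    change (⟨0, 1, 0, 0⟩ * ⟨0, 1, 0, 0⟩ : ℍ[K,-1,0,-1]) =
      (-1 : ℝ) • (1 : ℍ[K,-1,0,-1]) + (0 : ℝ) • (⟨0, 1, 0, 0⟩ : ℍ[K,-1,0,-1])
    ext <;> simp
  j_mul_j := by
    change (⟨0, 0, 1, 0⟩ * ⟨0, 0, 1, 0⟩ : ℍ[K,-1,0,-1]) = (-1 : ℝ) • (1 : ℍ[K,-1,0,-1])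
    ext <;> simp
  i_mul_j := by
    change (⟨0, 1, 0, 0⟩ * ⟨0, 0, 1, 0⟩ : ℍ[K,-1,0,-1]) = ⟨0, 0, 0, 1⟩
    ext <;> simp
  j_mul_i := by
    change (⟨0, 0, 1, 0⟩ * ⟨0, 1, 0, 0⟩ : ℍ[K,-1,0,-1]) =
      (0 : ℝ) • (⟨0, 0, 1, 0⟩ : ℍ[K,-1,0,-1]) - ⟨0, 0, 0, 1⟩
    ext <;> simp

/-- A quaternion literal typed as `ℍ[R]` (an anonymous constructor is typed as `ℍ[R,-1,0,-1]`). -/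
def QTaux.mkQ {R : Type*} [CommRing R] (a b c d : R) : ℍ[R] := ⟨a, b, c, d⟩

@[simp] lemma QTaux.mk_eq_mkQ {R : Type*} [CommRing R] (a b c d : R) :
    (⟨a, b, c, d⟩ : ℍ[R]) = QTaux.mkQ a b c d := rfl

@[simp] lemma QTaux.re_mkQ {R : Type*} [CommRing R] (a b c d : R) :
    (QTaux.mkQ a b c d).re = a := rfl

@[simp] lemma QTaux.imI_mkQ {R : Type*} [CommRing R] (a b c d : R) :
    (QTaux.mkQ a b c d).imI = b := rfl

@[simp] lemma QTaux.imJ_mkQ {R : Type*} [CommRing R] (a b c d : R) :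
    (QTaux.mkQ a b c d).imJ = c := rfl

@[simp] lemma QTaux.imK_mkQ {R : Type*} [CommRing R] (a b c d : R) :
    (QTaux.mkQ a b c d).imK = d := rfl

/-- The canonical map `ℍ[ℝ] →ₐ[ℝ] ℍ[K]`. -/
def QTaux.f : ℍ[ℝ] →ₐ[ℝ] ℍ[K] := (QTaux.qb K).liftHom

lemma QTaux.f_apply (a : ℍ[ℝ]) :
    QTaux.f K a = ⟨algebraMap ℝ K a.1, algebraMap ℝ K a.2, algebraMap ℝ K a.3,
      algebraMap ℝ K a.4⟩ := by
  show (QTaux.qb K).lift a = _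
  unfold QuaternionAlgebra.Basis.lift
  ext <;> simp [QTaux.qb, QuaternionAlgebra.algebraMap_eq, Algebra.algebraMap_eq_smul_one,
    Quaternion.algebraMap_def]

/-- The comparison map `ℍ[ℝ] ⊗[ℝ] K →ₐ[ℝ] ℍ[K]`. -/
def QTaux.φ : ℍ[ℝ] ⊗[ℝ] K →ₐ[ℝ] ℍ[K] :=
  Algebra.TensorProduct.lift (QTaux.f K) (IsScalarTower.toAlgHom ℝ K ℍ[K])
    (fun x y => show Commute (QTaux.f K x) (IsScalarTower.toAlgHom ℝ K ℍ[K] y) from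
      Algebra.commute_algebraMap_right y _)

lemma QTaux.φ_tmul (a : ℍ[ℝ]) (c : K) :
    QTaux.φ K (a ⊗ₜ c) = ⟨a.1 • c, a.2 • c, a.3 • c, a.4 • c⟩ := by
  rw [QTaux.φ, Algebra.TensorProduct.lift_tmul, QTaux.f_apply]
  ext <;> simp [Quaternion.algebraMap_def, IsScalarTower.coe_toAlgHom',
    Algebra.smul_def, mul_comm]

/-- The inverse map. -/
def QTaux.v (q : ℍ[K]) : ℍ[ℝ] ⊗[ℝ] K :=
  (1 : ℍ[ℝ]) ⊗ₜ q.1 + (QTaux.mkQ 0 1 0 0 : ℍ[ℝ]) ⊗ₜ q.2 +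
    (QTaux.mkQ 0 0 1 0 : ℍ[ℝ]) ⊗ₜ q.3 +
    (QTaux.mkQ 0 0 0 1 : ℍ[ℝ]) ⊗ₜ q.4

lemma QTaux.φ_v (q : ℍ[K]) : QTaux.φ K (QTaux.v K q) = q := by
  rw [QTaux.v, map_add, map_add, map_add, QTaux.φ_tmul, QTaux.φ_tmul, QTaux.φ_tmul,
    QTaux.φ_tmul]
  ext <;> simp

lemma QTaux.v_φ (x : ℍ[ℝ] ⊗[ℝ] K) : QTaux.v K (QTaux.φ K x) = x := by
  induction x using TensorProduct.induction_on with
  | zero => rw [map_zero]; simp [QTaux.v]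
  | add x y hx hy =>
      rw [map_add]
      have hadd : ∀ q r : ℍ[K], QTaux.v K (q + r) = QTaux.v K q + QTaux.v K r := by
        intro q r
        simp only [QTaux.v, Quaternion.re_add, Quaternion.imI_add, Quaternion.imJ_add,
          Quaternion.imK_add, tmul_add]
        abel
      rw [hadd, hx, hy]
  | tmul a c =>
      rw [QTaux.φ_tmul]
      simp only [QTaux.v]
      rw [tmul_smul, tmul_smul, tmul_smul, tmul_smul, smul_tmul', smul_tmul',
        smul_tmul', smul_tmul', ← add_tmul, ← add_tmul, ← add_tmul]
      congr 1
      ext <;> simp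

/-- The comparison equivalence. -/
def QTaux.e : (ℍ[ℝ] ⊗[ℝ] K) ≃ₐ[ℝ] ℍ[K] :=
  AlgEquiv.ofBijective (QTaux.φ K)
    ⟨Function.LeftInverse.injective (QTaux.v_φ K),
     Function.RightInverse.surjective (QTaux.φ_v K)⟩

end QTaux

/-- For a field extension `K` of `ℝ`, the algebra `ℍ ⊗[ℝ] K` of quaternions with scalars
extended to `K` is a division ring if and only if the quadratic form
`x₁² + x₂² + x₃² + x₄²` has only the trivial zero on `K`, i.e. if and only if `-1` is not a
sum of three squares in `K`. -/
theorem quaternion_tensor_isDivisionRing_iff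
    (K : Type*) [Field K] [Algebra ℝ K] :
    ((Nontrivial (ℍ[ℝ] ⊗[ℝ] K) ∧ ∀ x : ℍ[ℝ] ⊗[ℝ] K, x ≠ 0 → IsUnit x) ↔
      ∀ z : Fin 4 → K, (z 0) ^ 2 + (z 1) ^ 2 + (z 2) ^ 2 + (z 3) ^ 2 = 0 → z = 0) ∧
    ((Nontrivial (ℍ[ℝ] ⊗[ℝ] K) ∧ ∀ x : ℍ[ℝ] ⊗[ℝ] K, x ≠ 0 → IsUnit x) ↔
      ¬ ∃ a b c : K, a ^ 2 + b ^ 2 + c ^ 2 = -1) := by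
  set e := QTaux.e K with he
  have hQR : (∀ z : Fin 4 → K, (z 0) ^ 2 + (z 1) ^ 2 + (z 2) ^ 2 + (z 3) ^ 2 = 0 → z = 0) ↔
      ¬ ∃ a b c : K, a ^ 2 + b ^ 2 + c ^ 2 = -1 := by
    constructor
    · rintro hQ ⟨a, b, c, habc⟩
      have h0 := hQ ![1, a, b, c] (by
        simp only [Matrix.cons_val_zero, Matrix.cons_val_one, Matrix.head_cons,
          Matrix.cons_val_two, Matrix.tail_cons, Matrix.cons_val_three]
        linear_combination habc)
      have : (1 : K) = 0 := by simpa using congrFun h0 0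
      exact one_ne_zero this
    · intro hR z hz
      by_contra hz0
      have hex : ∃ i, z i ≠ 0 := by
        by_contra h
        push_neg at h
        exact hz0 (funext h)
      obtain ⟨i, hi⟩ := hex
      apply hR
      fin_cases i
      · have h0 : z 0 ≠ 0 := by simpa using hi
        exact ⟨z 1 / z 0, z 2 / z 0, z 3 / z 0, by
          field_simp
          linear_combination hz⟩
      · have h1 : z 1 ≠ 0 := by simpa using hi
        exact ⟨z 0 / z 1, z 2 / z 1, z 3 / z 1, by
          field_simp
          linear_combination hz⟩
      · have h2 : z 2 ≠ 0 := by simpa using hi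
        exact ⟨z 0 / z 2, z 1 / z 2, z 3 / z 2, by
          field_simp
          linear_combination hz⟩
      · have h3 : z 3 ≠ 0 := by simpa using hi
        exact ⟨z 0 / z 3, z 1 / z 3, z 2 / z 3, by
          field_simp
          linear_combination hz⟩
  have hPQ : (Nontrivial (ℍ[ℝ] ⊗[ℝ] K) ∧ ∀ x : ℍ[ℝ] ⊗[ℝ] K, x ≠ 0 → IsUnit x) ↔
      ∀ z : Fin 4 → K, (z 0) ^ 2 + (z 1) ^ 2 + (z 2) ^ 2 + (z 3) ^ 2 = 0 → z = 0 := by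
    constructor
    · rintro ⟨-, hU⟩ z hz
      by_contra hz0
      set q : ℍ[K] := ⟨z 0, z 1, z 2, z 3⟩ with hq
      have hqne : q ≠ 0 := by
        intro h
        rw [hq] at h
        obtain ⟨h0, h1, h2, h3⟩ : z 0 = 0 ∧ z 1 = 0 ∧ z 2 = 0 ∧ z 3 = 0 := by
          simpa [Quaternion.ext_iff] using h
        apply hz0
        funext i
        fin_cases i <;> assumption
      have hxne : e.symm q ≠ 0 := fun h => hqne (by
        have := congrArg e h
        simpa using this)
      have hu : IsUnit q := by
        have := (hU _ hxne).map e
        simpa using this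
      have hns : q * star q = 0 := by
        rw [Quaternion.self_mul_star]
        have hnsq : normSq q = 0 := by rw [Quaternion.normSq_def']; simpa [hq] using hz
        simp [hnsq]
      have hstar : star q = 0 := (hu.mul_right_eq_zero).mp hns
      exact hqne (by simpa using congrArg star hstar)
    · intro hQ
      have hnt : Nontrivial (ℍ[ℝ] ⊗[ℝ] K) := e.toEquiv.nontrivial
      refine ⟨hnt, fun x hx => ?_⟩
      set q : ℍ[K] := e x with hq
      have hqne : q ≠ 0 := fun h => hx (by
        have := congrArg e.symm h
        simpa [hq] using this)
      have hn : normSq q ≠ 0 := by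
        intro h
        rw [Quaternion.normSq_def'] at h
        have hzz := hQ ![q.1, q.2, q.3, q.4] (by simpa using h)
        apply hqne
        have h0 : q.1 = 0 := by simpa using congrFun hzz 0
        have h1 : q.2 = 0 := by simpa using congrFun hzz 1
        have h2 : q.3 = 0 := by simpa using congrFun hzz 2
        have h3 : q.4 = 0 := by simpa using congrFun hzz 3
        ext <;> simp [h0, h1, h2, h3]
      have hu : IsUnit q := by
        refine ⟨⟨q, (normSq q)⁻¹ • star q, ?_, ?_⟩, rfl⟩
        · rw [mul_smul_comm, Quaternion.self_mul_star, Quaternion.smul_coe,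
            inv_mul_cancel₀ hn, Quaternion.coe_one]
        · rw [smul_mul_assoc, Quaternion.star_mul_self, Quaternion.smul_coe,
            inv_mul_cancel₀ hn, Quaternion.coe_one]
      have : IsUnit (e.symm q) := hu.map e.symm
      rwa [hq, AlgEquiv.symm_apply_apply] at this
  exact ⟨hPQ, hPQ.trans hQR⟩
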